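/- Let S be a semidomain. Then S equals the intersection, inside its semifield of fractions, of its localizations at all maximal ideals: ⋂_{m ∈ Max(S)} S_m = S. -/
import Mathlib


/-- A semidomain is the intersection of its localizations at the maximal
ideals, inside its semifield of fractions. -/
theorem inter_localizations_maximal {S K : Type*} [CommSemiring S] [Nontrivial S]
    [IsCancelMulZero S] [CommSemiring K] [Algebra S K]
    [IsLocalization (nonZeroDivisors S) K] :
    (⋂ m ∈ {m : Ideal S | m.IsMaximal},
        {x : K | ∃ s t : S, t ∉ m ∧ x * algebraMap S K t = algebraMap S K s}) =
      Set.range (algebraMap S K) := by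
  ext x
  simp only [Set.mem_iInter, Set.mem_setOf_eq, Set.mem_range]
  constructor
  · intro hx
    -- the ideal of denominators of x
    let I : Ideal S :=
      { carrier := {t : S | ∃ s : S, x * algebraMap S K t = algebraMap S K s}
        zero_mem' := ⟨0, by simp⟩
        add_mem' := by
          rintro a b ⟨sa, ha⟩ ⟨sb, hb⟩
          exact ⟨sa + sb, by simp [map_add, mul_add, ha, hb]⟩
        smul_mem' := by
          rintro c a ⟨sa, ha⟩
          refine ⟨c * sa, ?_⟩
          simp only [smul_eq_mul, map_mul]
          rw [mul_comm (algebraMap S K c), ← mul_assoc, ha, mul_comm]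
      }
    by_cases hI : I = ⊤
    · have h1 : (1 : S) ∈ I := hI ▸ Submodule.mem_top
      obtain ⟨s, hs⟩ := h1
      exact ⟨s, by simpa using hs.symm⟩
    · obtain ⟨m, hm, hIm⟩ := Ideal.exists_le_maximal I hI
      obtain ⟨s, t, htm, hst⟩ := hx m hm
      exact absurd (hIm ⟨s, hst⟩) htm
  · rintro ⟨s, rfl⟩ m hm
    exact ⟨s, 1, fun h => hm.ne_top (Ideal.eq_top_of_isUnit_mem m h isUnit_one), by simp⟩
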